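/- Let N ≥ 2 be an integer and suppose U : ℕ → ℝ satisfies, for all n ≥ 0, the tropical DTKQ equation U_{n+N} = max(0, −S_n, U_n, U_{n+1}, …, U_{n+N−1}), where S_n := ∑_{j=1}^{N−1} U_{n+j}. Then there exist a real constant C ≥ 0 and an integer m ≥ 0 such that U_n = C for all n ≥ m; i.e. every orbit reaches a constant fixed point after finitely many steps. -/
import Mathlib


/-- every orbit of the tropical DTKQ equation reaches a constant
fixed point `C ≥ 0` after finitely many steps. -/
theorem tropical_dtkq_reaches_fixed_point (N : ℕ) (hN : 2 ≤ N) (U : ℕ → ℝ)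
    (S : ℕ → ℝ) (hS : ∀ n : ℕ, S n = ∑ j ∈ Finset.range (N - 1), U (n + j + 1))
    (hU : ∀ n : ℕ, U (n + N) =
      max (max 0 (-S n))
        ((Finset.range N).sup' (Finset.nonempty_range_iff.mpr (by omega))
          (fun j => U (n + j)))) :
    ∃ C : ℝ, 0 ≤ C ∧ ∃ m : ℕ, ∀ n : ℕ, m ≤ n → U n = C := by
  have hne : (Finset.range N).Nonempty := Finset.nonempty_range_iff.mpr (by omega)
  have h0 : ∀ n, 0 ≤ U (n + N) := by
    intro n
    rw [hU n]
    exact le_max_of_le_left (le_max_left _ _)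
  have h0' : ∀ m, N ≤ m → 0 ≤ U m := by
    intro m hm
    have := h0 (m - N)
    rwa [Nat.sub_add_cancel hm] at this
  have hup : ∀ n j, j < N → U (n + j) ≤ U (n + N) := by
    intro n j hj
    rw [hU n]
    exact le_max_of_le_right
      (Finset.le_sup' (fun j => U (n + j)) (Finset.mem_range.mpr hj))
  have hstep : ∀ k, N - 1 ≤ k → U k ≤ U (k + 1) := by
    intro k hk
    have := hup (k - (N - 1)) (N - 1) (by omega)
    have e1 : k - (N - 1) + (N - 1) = k := by omega
    have e2 : k - (N - 1) + N = k + 1 := by omega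
    rwa [e1, e2] at this
  have hmono : ∀ a b, N - 1 ≤ a → a ≤ b → U a ≤ U b := by
    intro a b ha hab
    induction b, hab using Nat.le_induction with
    | base => exact le_rfl
    | succ n hn ih => exact ih.trans (hstep n (by omega))
  have key : ∀ n, N - 1 ≤ n → U (n + N) = U (n + (N - 1)) := by
    intro n hn
    have hSnn : 0 ≤ S n := by
      rw [hS n]
      apply Finset.sum_nonneg
      intro j hj
      exact h0' _ (by omega)
    have hsup : (Finset.range N).sup' hne (fun j => U (n + j)) = U (n + (N - 1)) := by
      apply le_antisymm
      · apply Finset.sup'_le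
        intro j hj
        have hj' := Finset.mem_range.mp hj
        have hA : N - 1 ≤ n + j := by omega
        have hB : n + j ≤ n + (N - 1) := by omega
        exact hmono (n + j) (n + (N - 1)) hA hB
      · have hm : N - 1 ∈ Finset.range N := Finset.mem_range.mpr (by omega)
        exact Finset.le_sup' (fun j => U (n + j)) hm
    rw [hU n, hsup]
    apply max_eq_right
    apply max_le
    · exact h0' _ (by omega)
    · exact (neg_nonpos.mpr hSnn).trans (h0' _ (by omega))
  refine ⟨U (N + N), h0' _ (by omega), N + N, ?_⟩
  intro n hn
  induction n, hn using Nat.le_induction with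
  | base => rfl
  | succ k hk ih =>
    have e := key (k + 1 - N) (by omega)
    have e1 : (k + 1 - N) + N = k + 1 := by omega
    have e2 : (k + 1 - N) + (N - 1) = k := by omega
    rw [e1, e2] at e
    rw [e, ih]
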